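/- Corollary 3 (interpolating one-step binary KL bound): In the meta-learning CMI setup, if L̂_train = 0, then L̄_pop ≤ 4 − 4·exp( −(1/(n·n̂))·Σ_{i,j} I(λ^{(i)}_j; Ŝ_i, S^{(i)}_j | Z̃) ) ≤ (4/(n·n̂))·Σ_{i,j} I(λ^{(i)}_j; Ŝ_i, S^{(i)}_j | Z̃). -/

import Mathlib

open MeasureTheory ProbabilityTheory Real
open scoped ENNReal ProbabilityTheory

open Classical in
/-- Kullback-Leibler divergence between two measures, valued in `ℝ≥0∞`. -/
noncomputable def klDiv {α : Type*} [MeasurableSpace α] (μ ν : Measure α) : ℝ≥0∞ :=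
  if μ ≪ ν ∧ Integrable (llr μ ν) μ then ENNReal.ofReal (∫ x, llr μ ν x ∂μ) else ⊤

/-- Mutual information `I(X;Y) = D(P_{XY} ‖ P_X ⊗ P_Y)`. -/
noncomputable def mutualInfo {Ω α β : Type*} [MeasurableSpace Ω] [MeasurableSpace α]
    [MeasurableSpace β] (μ : Measure Ω) (X : Ω → α) (Y : Ω → β) : ℝ≥0∞ :=
  klDiv (μ.map fun ω => (X ω, Y ω)) ((μ.map X).prod (μ.map Y))

/-- Conditional mutual information `I(X;Y|V)`, expressed as the KL divergence between the
joint law of `(V,(X,Y))` and the measure in which `X` and `Y` are conditionally independent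
given `V` (with the same conditional marginals). -/
noncomputable def condMutualInfo {Ω α β γ : Type*} [MeasurableSpace Ω]
    [MeasurableSpace α] [StandardBorelSpace α] [Nonempty α]
    [MeasurableSpace β] [StandardBorelSpace β] [Nonempty β]
    [MeasurableSpace γ]
    (μ : Measure Ω) [IsFiniteMeasure μ] (X : Ω → α) (Y : Ω → β) (V : Ω → γ) : ℝ≥0∞ :=
  klDiv (μ.map fun ω => (V ω, (X ω, Y ω)))
    ((μ.map V) ⊗ₘ ((condDistrib X V μ).prod (condDistrib Y V μ)))

/-- Disintegrated mutual information `I^V(X;Y)` evaluated at the outcome `ω`: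
the KL divergence between the conditional joint law of `(X,Y)` given `V` and the product of
the conditional marginals, evaluated at `V ω`. -/
noncomputable def dMutualInfo {Ω α β γ : Type*} [MeasurableSpace Ω]
    [MeasurableSpace α] [StandardBorelSpace α] [Nonempty α]
    [MeasurableSpace β] [StandardBorelSpace β] [Nonempty β]
    [MeasurableSpace γ]
    (μ : Measure Ω) [IsFiniteMeasure μ] (X : Ω → α) (Y : Ω → β) (V : Ω → γ) (ω : Ω) : ℝ≥0∞ :=
  klDiv ((condDistrib (fun ω' => (X ω', Y ω')) V μ) (V ω))
    (((condDistrib X V μ) (V ω)).prod ((condDistrib Y V μ) (V ω)))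

/-- **The meta-learning CMI setup.**
There are `nt` task pairs and `n` sample pairs per task.  Tasks are drawn i.i.d. from the
task distribution `τdistro`; the meta-supersample `Zt` consists of samples drawn independently
from the in-task distributions `D τ`.  The membership variables `Sh` (meta membership) and
`S` (in-task membership) have i.i.d. Bernoulli(1/2) entries, independent of the data and of the
algorithmic randomness `Rhat, R`.  The meta learner `A` and base learner `B` produce losses
via the `[0,1]`-valued loss function `loss`. -/
structure MetaSetup (Ω 𝒯 𝒵 𝒰 𝒲 Rh Rb : Type*)
    [MeasurableSpace Ω] [MeasurableSpace 𝒯] [MeasurableSpace 𝒵] [MeasurableSpace 𝒰]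
    [MeasurableSpace 𝒲] [MeasurableSpace Rh] [MeasurableSpace Rb]
    (nt n : ℕ) where
  μ : Measure Ω
  prob : IsProbabilityMeasure μ
  τdistro : Measure 𝒯
  probτ : IsProbabilityMeasure τdistro
  D : Kernel 𝒯 𝒵
  markovD : IsMarkovKernel D
  ρh : Measure Rh
  probρh : IsProbabilityMeasure ρh
  ρ : Measure Rb
  probρ : IsProbabilityMeasure ρ
  Zt : Ω → Fin nt → Fin 2 → Fin n → Fin 2 → 𝒵
  Sh : Ω → Fin nt → Fin 2
  S : Ω → Fin nt → Fin 2 → Fin n → Fin 2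
  Rhat : Ω → Rh
  R : Ω → Fin nt → Rb
  A : (Fin nt → Fin n → 𝒵) → Rh → 𝒰
  B : (Fin n → 𝒵) → Rb → 𝒰 → 𝒲
  loss : 𝒲 → 𝒵 → ℝ
  loss_mem : ∀ w z, loss w z ∈ Set.Icc (0 : ℝ) 1
  meas_Zt : Measurable Zt
  meas_Sh : Measurable Sh
  meas_S : Measurable S
  meas_Rhat : Measurable Rhat
  meas_R : Measurable R
  meas_A : Measurable fun p : (Fin nt → Fin n → 𝒵) × Rh => A p.1 p.2
  meas_B : Measurable fun p : (Fin n → 𝒵) × Rb × 𝒰 => B p.1 p.2.1 p.2.2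
  meas_loss : Measurable fun p : 𝒲 × 𝒵 => loss p.1 p.2
  law_Zt : μ.map Zt
    = Measure.pi fun _i : Fin nt => Measure.pi fun _k : Fin 2 =>
        τdistro.bind fun t => Measure.pi fun _j : Fin n => Measure.pi fun _l : Fin 2 => D t
  law_S : μ.map (fun ω => (Sh ω, S ω))
    = ((PMF.uniformOfFintype (Fin nt → Fin 2)).toMeasure).prod
        ((PMF.uniformOfFintype (Fin nt → Fin 2 → Fin n → Fin 2)).toMeasure)
  law_R : μ.map (fun ω => (Rhat ω, R ω)) = ρh.prod (Measure.pi fun _ : Fin nt => ρ)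
  indep₁ : IndepFun Zt (fun ω => ((Sh ω, S ω), (Rhat ω, R ω))) μ
  indep₂ : IndepFun (fun ω => (Sh ω, S ω)) (fun ω => (Rhat ω, R ω)) μ

namespace MetaSetup

variable {Ω 𝒯 𝒵 𝒰 𝒲 Rh Rb : Type*}
    [MeasurableSpace Ω] [MeasurableSpace 𝒯] [MeasurableSpace 𝒵] [MeasurableSpace 𝒰]
    [MeasurableSpace 𝒲] [MeasurableSpace Rh] [MeasurableSpace Rb]
    {nt n : ℕ}

instance (M : MetaSetup Ω 𝒯 𝒵 𝒰 𝒲 Rh Rb nt n) : IsProbabilityMeasure M.μ := M.prob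

variable (M : MetaSetup Ω 𝒯 𝒵 𝒰 𝒲 Rh Rb nt n)

/-- Output `U` of the meta learner. -/
noncomputable def U (ω : Ω) : 𝒰 :=
  M.A (fun i j => M.Zt ω i (M.Sh ω i) j (M.S ω i (M.Sh ω i) j)) (M.Rhat ω)

/-- Output `W^{(i,k)}` of the base learner for task `(i,k)`. -/
noncomputable def W (i : Fin nt) (k : Fin 2) (ω : Ω) : 𝒲 :=
  M.B (fun j => M.Zt ω i k j (M.S ω i k j)) (M.R ω i) (M.U ω)

/-- The loss `λ^{(i,k)}_{j,l}` incurred on sample `(j,l)` of task `(i,k)`. -/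
noncomputable def lam (i : Fin nt) (k : Fin 2) (j : Fin n) (l : Fin 2) (ω : Ω) : ℝ :=
  M.loss (M.W i k ω) (M.Zt ω i k j l)

/-- The average meta-population loss `L̄_pop`. -/
noncomputable def Lpop : ℝ :=
  (n * nt : ℝ)⁻¹ * ∑ i : Fin nt, ∑ j : Fin n,
    ∫ ω, M.lam i (1 - M.Sh ω i) j (1 - M.S ω i (1 - M.Sh ω i) j) ω ∂M.μ

/-- The average meta-training loss `L̂_train`. -/
noncomputable def Ltrain : ℝ :=
  (n * nt : ℝ)⁻¹ * ∑ i : Fin nt, ∑ j : Fin n,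
    ∫ ω, M.lam i (M.Sh ω i) j (M.S ω i (M.Sh ω i) j) ω ∂M.μ

/-- The average auxiliary test loss `L̄_test` (test data of observed tasks). -/
noncomputable def Ltest : ℝ :=
  (n * nt : ℝ)⁻¹ * ∑ i : Fin nt, ∑ j : Fin n,
    ∫ ω, M.lam i (M.Sh ω i) j (1 - M.S ω i (M.Sh ω i) j) ω ∂M.μ

/-- The average auxiliary training loss `L̂_aux` (training data of unobserved tasks). -/
noncomputable def Laux : ℝ :=
  (n * nt : ℝ)⁻¹ * ∑ i : Fin nt, ∑ j : Fin n,
    ∫ ω, M.lam i (1 - M.Sh ω i) j (M.S ω i (1 - M.Sh ω i) j) ω ∂M.μ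

end MetaSetup

open Classical in
/-- `exp(-x)` for `x : ℝ≥0∞`, with `exp(-∞) = 0`. -/
noncomputable def expNeg (x : ℝ≥0∞) : ℝ :=
  if x = ⊤ then 0 else Real.exp (-x.toReal)

lemma expNeg_nonneg (x : ℝ≥0∞) : 0 ≤ expNeg x := by
  unfold expNeg; split
  · exact le_refl 0
  · exact (Real.exp_pos _).le

lemma expNeg_le_one (x : ℝ≥0∞) : expNeg x ≤ 1 := by
  unfold expNeg; split
  · norm_num
  · exact Real.exp_le_one_iff.2 (by simp [ENNReal.toReal_nonneg])

/-- Core inequality: if `P A = 1` then `exp(-KL(P‖Q)) ≤ Q A`. -/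
lemma expNeg_klDiv_le {α : Type*} [MeasurableSpace α] (P Q : Measure α)
    [IsProbabilityMeasure P] [IsProbabilityMeasure Q]
    {A : Set α} (hA : MeasurableSet A) (hPA : P A = 1) :
    expNeg (klDiv P Q) ≤ (Q A).toReal := by
  rw [klDiv]
  split_ifs with h
  · obtain ⟨hAC, hint⟩ := h
    rw [expNeg, if_neg ENNReal.ofReal_ne_top]
    set K : ℝ := ∫ x, llr P Q x ∂P with hK
    have hcompl : P Aᶜ = 0 := by
      have := measure_compl hA (measure_ne_top P A)
      rw [hPA, measure_univ] at this; simp [this]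
    have haeA : ∀ᵐ x ∂P, x ∈ A := by
      rw [ae_iff]; exact hcompl
    -- the function g = indicator A (rnDeriv)⁻¹
    set r : α → ℝ≥0∞ := P.rnDeriv Q with hr
    set g : α → ℝ := A.indicator (fun x => ((r x).toReal)⁻¹) with hg
    have hrmeas : Measurable r := Measure.measurable_rnDeriv P Q
    have hgmeas : Measurable g := (hrmeas.ennreal_toReal.inv).indicator hA
    have hgnonneg : ∀ x, 0 ≤ g x := by
      intro x
      by_cases hx : x ∈ A <;> simp [hg, Set.indicator_apply, hx, inv_nonneg, ENNReal.toReal_nonneg]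
    -- pointwise bound for the lintegral
    have hptw : ∀ x, r x * ENNReal.ofReal (g x) ≤ A.indicator (fun _ => 1) x := by
      intro x
      by_cases hx : x ∈ A
      · simp only [hg, Set.indicator_of_mem hx]
        rcases eq_or_ne (r x) ⊤ with ht | ht
        · simp [ht]
        rcases eq_or_ne (r x) 0 with h0 | h0
        · simp [h0]
        · have htr : 0 < (r x).toReal := ENNReal.toReal_pos h0 ht
          rw [ENNReal.ofReal_inv_of_pos htr, ENNReal.ofReal_toReal ht]
          exact le_of_eq (ENNReal.mul_inv_cancel h0 ht)
      · simp [hg, Set.indicator_of_notMem hx]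
    have hlint : ∫⁻ x, ENNReal.ofReal (g x) ∂P ≤ Q A := by
      rw [← lintegral_rnDeriv_mul hAC (by fun_prop)]
      calc ∫⁻ x, r x * ENNReal.ofReal (g x) ∂Q
          ≤ ∫⁻ x, A.indicator (fun _ => 1) x ∂Q := lintegral_mono hptw
        _ = Q A := by rw [lintegral_indicator_const hA, one_mul]
    have hgint : Integrable g P := by
      refine ⟨hgmeas.aestronglyMeasurable, ?_⟩
      rw [hasFiniteIntegral_iff_norm]
      calc ∫⁻ x, ENNReal.ofReal ‖g x‖ ∂P
          = ∫⁻ x, ENNReal.ofReal (g x) ∂P := by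
            congr 1; funext x; rw [Real.norm_of_nonneg (hgnonneg x)]
        _ ≤ Q A := hlint
        _ < ⊤ := measure_lt_top _ _
    have hgintle : ∫ x, g x ∂P ≤ (Q A).toReal := by
      rw [integral_eq_lintegral_of_nonneg_ae (Filter.Eventually.of_forall hgnonneg)
        hgmeas.aestronglyMeasurable]
      exact ENNReal.toReal_mono (measure_ne_top _ _) hlint
    -- φ = indicator A (-llr)
    set φ : α → ℝ := A.indicator (fun x => -(llr P Q x)) with hφ
    have hφint : Integrable φ P := hint.neg.indicator hA
    have hφae : φ =ᵐ[P] fun x => -(llr P Q x) := by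
      filter_upwards [haeA] with x hx
      simp [hφ, Set.indicator_of_mem hx]
    have hexpae : (fun x => Real.exp (φ x)) =ᵐ[P] g := by
      filter_upwards [haeA, Measure.rnDeriv_pos hAC,
        hAC.ae_le (Measure.rnDeriv_lt_top P Q)] with x hx hpos hlt
      have hrt : 0 < (r x).toReal := ENNReal.toReal_pos hpos.ne' hlt.ne
      simp only [hφ, hg, Set.indicator_of_mem hx, llr_def]
      rw [Real.exp_neg, Real.exp_log hrt]
    have hexpint : Integrable (fun x => Real.exp (φ x)) P := hgint.congr hexpae.symm
    have hjensen : Real.exp (∫ x, φ x ∂P) ≤ ∫ x, Real.exp (φ x) ∂P := by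
      have := convexOn_exp.map_integral_le continuous_exp.continuousOn isClosed_univ
        (Filter.Eventually.of_forall fun x => Set.mem_univ (φ x)) hφint hexpint
      simpa using this
    have hφeq : ∫ x, φ x ∂P = -K := by
      rw [integral_congr_ae hφae, integral_neg]
    have hexpeq : ∫ x, Real.exp (φ x) ∂P = ∫ x, g x ∂P := integral_congr_ae hexpae
    have hmain : Real.exp (-K) ≤ (Q A).toReal := by
      rw [← hφeq]
      exact hjensen.trans (hexpeq.le.trans hgintle)
    calc Real.exp (-(ENNReal.ofReal K).toReal) ≤ Real.exp (-K) := by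
          apply Real.exp_le_exp.2
          rcases le_total 0 K with h | h
          · rw [ENNReal.toReal_ofReal h]
          · simp [ENNReal.ofReal_of_nonpos h]; linarith
      _ ≤ (Q A).toReal := hmain
  · simp [expNeg]

/-- If `∫ f dP = 0` for `f ∈ [0,1]`, then `∫ f dQ ≤ 1 - exp(-KL(P‖Q))`. -/
lemma integral_le_one_sub_expNeg_klDiv {α : Type*} [MeasurableSpace α] (P Q : Measure α)
    [IsProbabilityMeasure P] [IsProbabilityMeasure Q]
    {f : α → ℝ} (hf : Measurable f) (h0 : ∀ x, 0 ≤ f x) (h1 : ∀ x, f x ≤ 1)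
    (hP : ∫ x, f x ∂P = 0) :
    ∫ x, f x ∂Q ≤ 1 - expNeg (klDiv P Q) := by
  set A : Set α := {x | f x = 0} with hA
  have hAmeas : MeasurableSet A := hf (measurableSet_singleton 0)
  have hPint : Integrable f P := by
    refine ⟨hf.aestronglyMeasurable, ?_⟩
    apply HasFiniteIntegral.of_bounded (C := 1)
    filter_upwards with x
    rw [Real.norm_of_nonneg (h0 x)]; exact h1 x
  have hPA : P A = 1 := by
    have hae : ∀ᵐ x ∂P, f x = 0 :=
      (integral_eq_zero_iff_of_nonneg (fun x => h0 x) hPint).1 hP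
    rw [← prob_compl_eq_zero_iff hAmeas]
    rw [ae_iff] at hae
    exact hae
  have key := expNeg_klDiv_le P Q hAmeas hPA
  have hQint : Integrable f Q := by
    refine ⟨hf.aestronglyMeasurable, ?_⟩
    apply HasFiniteIntegral.of_bounded (C := 1)
    filter_upwards with x
    rw [Real.norm_of_nonneg (h0 x)]; exact h1 x
  have hfle : ∀ x, f x ≤ Aᶜ.indicator (fun _ => (1:ℝ)) x := by
    intro x
    by_cases hx : x ∈ A
    · have : f x = 0 := hx
      rw [this, Set.indicator_of_notMem (by simpa using hx)]
    · rw [Set.indicator_of_mem (by simpa using hx)]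
      exact h1 x
  have hQA : (Q Aᶜ).toReal = 1 - (Q A).toReal := by
    rw [measure_compl hAmeas (measure_ne_top Q A), measure_univ,
      ENNReal.toReal_sub_of_le prob_le_one ENNReal.one_ne_top, ENNReal.toReal_one]
  calc ∫ x, f x ∂Q ≤ ∫ x, Aᶜ.indicator (fun _ => (1:ℝ)) x ∂Q := by
        apply integral_mono hQint _ hfle
        rw [integrable_indicator_iff hAmeas.compl]
        exact (integrable_const _).integrableOn
    _ = (Q Aᶜ).toReal := by rw [integral_indicator_const _ hAmeas.compl]; simp; rfl
    _ = 1 - (Q A).toReal := hQA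
    _ ≤ 1 - expNeg (klDiv P Q) := by linarith

lemma uniform_prod_uniform (α β : Type*) [Fintype α] [Fintype β] [Nonempty α] [Nonempty β]
    [MeasurableSpace α] [MeasurableSpace β]
    [MeasurableSingletonClass α] [MeasurableSingletonClass β] :
    ((PMF.uniformOfFintype α).toMeasure).prod ((PMF.uniformOfFintype β).toMeasure)
      = (PMF.uniformOfFintype (α × β)).toMeasure := by
  rw [Measure.ext_iff_singleton]
  rintro ⟨a, b⟩
  rw [PMF.toMeasure_apply_singleton _ _ (measurableSet_singleton _)]
  rw [show ({(a,b)} : Set (α × β)) = {a} ×ˢ {b} from (Set.singleton_prod_singleton).symm,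
    Measure.prod_prod,
    PMF.toMeasure_apply_singleton _ _ (measurableSet_singleton _),
    PMF.toMeasure_apply_singleton _ _ (measurableSet_singleton _),
    PMF.uniformOfFintype_apply, PMF.uniformOfFintype_apply, PMF.uniformOfFintype_apply,
    Fintype.card_prod, Nat.cast_mul, ENNReal.mul_inv (by simp [Fintype.card_ne_zero]) (by simp)]

lemma map_uniform_of_card_fiber {α β : Type*} [Fintype α] [Fintype β] [Nonempty α] [Nonempty β]
    [MeasurableSpace α] [MeasurableSpace β]
    [MeasurableSingletonClass α] [MeasurableSingletonClass β]
    (f : α → β) (N : ℕ) (hN : ∀ b, Nat.card {a // f a = b} = N) :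
    ((PMF.uniformOfFintype α).toMeasure).map f = (PMF.uniformOfFintype β).toMeasure := by
  classical
  have hfilt : ∀ b, (Finset.univ.filter (fun a => f a = b)).card = N := by
    intro b
    rw [← hN b, Nat.card_eq_fintype_card, Fintype.card_subtype]
  have hcard : Fintype.card α = Fintype.card β * N := by
    show Finset.univ.card = _
    rw [Finset.card_eq_sum_card_fiberwise (fun x _ => Finset.mem_univ (f x))]
    simp only [hfilt, Finset.sum_const, Finset.card_univ, smul_eq_mul]
  have hNne : (N : ℝ≥0∞) ≠ 0 := by
    have hα : Fintype.card α ≠ 0 := Fintype.card_ne_zero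
    intro h
    rw [show N = 0 by exact_mod_cast h, mul_zero] at hcard
    exact hα hcard
  rw [Measure.ext_iff_singleton]
  intro b
  rw [Measure.map_apply (measurable_of_countable f) (measurableSet_singleton b),
    PMF.toMeasure_apply _ ((measurableSet_singleton b).preimage (measurable_of_countable f)),
    PMF.toMeasure_apply_singleton _ _ (measurableSet_singleton _),
    PMF.uniformOfFintype_apply, tsum_fintype]
  have hind : ∀ a : α, (f ⁻¹' {b}).indicator (⇑(PMF.uniformOfFintype α)) a
      = if f a = b then ((Fintype.card α : ℝ≥0∞))⁻¹ else 0 := by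
    intro a
    by_cases h : f a = b <;> simp [Set.indicator_apply, h, PMF.uniformOfFintype_apply]
  rw [Finset.sum_congr rfl (fun a _ => hind a), ← Finset.sum_filter, Finset.sum_const, hfilt,
    nsmul_eq_mul, hcard, Nat.cast_mul,
    ENNReal.mul_inv (Or.inl (by simp [Fintype.card_ne_zero])) (Or.inl (by simp)),
    ← mul_assoc, mul_comm (N : ℝ≥0∞), mul_assoc, ENNReal.mul_inv_cancel hNne (by simp), mul_one]

/-- Splitting a function subtype constrained only through its value at `i`. -/
def pieceEquiv {ι κ : Type*} [DecidableEq ι] (i : ι) (Q : κ → Prop) :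
    {g : ι → κ // Q (g i)} ≃ {b : κ // Q b} × ({j : ι // j ≠ i} → κ) where
  toFun g := (⟨g.1 i, g.2⟩, fun j => g.1 j.1)
  invFun p := ⟨fun j => if h : j = i then p.1.1 else p.2 ⟨j, h⟩, by simp [p.1.2]⟩
  left_inv g := by
    apply Subtype.ext
    funext j
    by_cases h : j = i
    · subst h; simp
    · simp [h]
  right_inv p := by
    refine Prod.ext (Subtype.ext ?_) (funext fun j => ?_)
    · simp
    · simp [j.2]

def subtypeEqEquivPUnit {κ : Type*} (c : κ) : {v // v = c} ≃ Unit where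
  toFun _ := ()
  invFun _ := ⟨c, rfl⟩
  left_inv := by rintro ⟨v, rfl⟩; rfl
  right_inv _ := rfl

def valFiberEquiv {ι κ : Type*} [DecidableEq ι] (i : ι) (c : κ) :
    {g : ι → κ // g i = c} ≃ ({j : ι // j ≠ i} → κ) :=
  (pieceEquiv i (fun v => v = c)).trans
    ((Equiv.prodCongr (subtypeEqEquivPUnit c) (Equiv.refl _)).trans (Equiv.punitProd _))

def innerFiberEquiv {n : ℕ} (j : Fin n) (t : Fin 2 → Fin 2) :
    {b : Fin 2 → Fin n → Fin 2 // (fun k => b k j) = t}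
      ≃ (Fin 2 → {j' : Fin n // j' ≠ j} → Fin 2) :=
  calc {b : Fin 2 → Fin n → Fin 2 // (fun k => b k j) = t}
      ≃ {b : Fin 2 → Fin n → Fin 2 // ∀ k, b k j = t k} :=
        Equiv.subtypeEquivRight (fun b => ⟨fun h k => congrFun h k, fun h => funext h⟩)
    _ ≃ (∀ k : Fin 2, {c : Fin n → Fin 2 // c j = t k}) :=
        Equiv.subtypePiEquivPi (β := fun _ : Fin 2 => Fin n → Fin 2) (p := fun k c => c j = t k)
    _ ≃ (Fin 2 → {j' : Fin n // j' ≠ j} → Fin 2) :=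
        Equiv.piCongrRight (fun k => valFiberEquiv j (t k))

def bigFiberEquiv {nt n : ℕ} (i : Fin nt) (j : Fin n) (y₀ : Fin 2 × (Fin 2 → Fin 2)) :
    {p : (Fin nt → Fin 2) × (Fin nt → Fin 2 → Fin n → Fin 2) //
        (p.1 i, fun k : Fin 2 => p.2 i k j) = y₀}
      ≃ ({j' : Fin nt // j' ≠ i} → Fin 2) ×
        ((Fin 2 → {j' : Fin n // j' ≠ j} → Fin 2) ×
         ({i' : Fin nt // i' ≠ i} → Fin 2 → Fin n → Fin 2)) :=
  calc {p : (Fin nt → Fin 2) × (Fin nt → Fin 2 → Fin n → Fin 2) //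
        (p.1 i, fun k : Fin 2 => p.2 i k j) = y₀}
      ≃ {p : (Fin nt → Fin 2) × (Fin nt → Fin 2 → Fin n → Fin 2) //
          p.1 i = y₀.1 ∧ (fun k : Fin 2 => p.2 i k j) = y₀.2} :=
        Equiv.subtypeEquivRight (fun p => Prod.ext_iff)
    _ ≃ {g : Fin nt → Fin 2 // g i = y₀.1} ×
        {h : Fin nt → Fin 2 → Fin n → Fin 2 // (fun k : Fin 2 => h i k j) = y₀.2} :=
        Equiv.subtypeProdEquivProd (p := fun g : Fin nt → Fin 2 => g i = y₀.1)
          (q := fun h : Fin nt → Fin 2 → Fin n → Fin 2 => (fun k : Fin 2 => h i k j) = y₀.2)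
    _ ≃ ({j' : Fin nt // j' ≠ i} → Fin 2) ×
        ({b : Fin 2 → Fin n → Fin 2 // (fun k : Fin 2 => b k j) = y₀.2} ×
         ({i' : Fin nt // i' ≠ i} → Fin 2 → Fin n → Fin 2)) :=
        Equiv.prodCongr (valFiberEquiv i y₀.1)
          (pieceEquiv (κ := Fin 2 → Fin n → Fin 2) i (fun b => (fun k : Fin 2 => b k j) = y₀.2))
    _ ≃ ({j' : Fin nt // j' ≠ i} → Fin 2) ×
        ((Fin 2 → {j' : Fin n // j' ≠ j} → Fin 2) ×
         ({i' : Fin nt // i' ≠ i} → Fin 2 → Fin n → Fin 2)) :=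
        Equiv.prodCongr (Equiv.refl _)
          (Equiv.prodCongr (innerFiberEquiv j y₀.2) (Equiv.refl _))

lemma law_Y_aux {nt n : ℕ} (i : Fin nt) (j : Fin n) :
    (((PMF.uniformOfFintype ((Fin nt → Fin 2) × (Fin nt → Fin 2 → Fin n → Fin 2)))).toMeasure).map
        (fun p => (p.1 i, fun k : Fin 2 => p.2 i k j))
      = (PMF.uniformOfFintype (Fin 2 × (Fin 2 → Fin 2))).toMeasure := by
  apply map_uniform_of_card_fiber
  intro y₀
  exact Nat.card_congr (bigFiberEquiv i j y₀)
namespace MetaSetup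

variable {Ω 𝒯 𝒵 𝒰 𝒲 Rh Rb : Type*}
    [MeasurableSpace Ω] [MeasurableSpace 𝒯] [MeasurableSpace 𝒵] [MeasurableSpace 𝒰]
    [MeasurableSpace 𝒲] [MeasurableSpace Rh] [MeasurableSpace Rb]
    {nt n : ℕ} (M : MetaSetup Ω 𝒯 𝒵 𝒰 𝒲 Rh Rb nt n)

lemma meas_select (i : Fin nt) (j : Fin n) :
    Measurable fun ω => M.Zt ω i (M.Sh ω i) j (M.S ω i (M.Sh ω i) j) := by
  have h : Measurable fun q : (Fin 2 → Fin n → Fin 2 → 𝒵) × (Fin 2 × (Fin 2 → Fin n → Fin 2)) =>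
      q.1 q.2.1 j (q.2.2 q.2.1 j) := by
    apply measurable_from_prod_countable_left (β := Fin 2 × (Fin 2 → Fin n → Fin 2))
    intro y
    have : Measurable fun x : Fin 2 → Fin n → Fin 2 → 𝒵 => x y.1 j (y.2 y.1 j) := by
      have h1 : Measurable fun x : Fin 2 → Fin n → Fin 2 → 𝒵 => x y.1 := measurable_pi_apply _
      have h2 : Measurable fun x : Fin n → Fin 2 → 𝒵 => x j (y.2 y.1 j) :=
        (measurable_pi_apply _).comp (measurable_pi_apply _)
      exact h2.comp h1
    exact this
  have hc : Measurable fun ω => (M.Zt ω i, (M.Sh ω i, M.S ω i)) :=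
    (((measurable_pi_apply i).comp M.meas_Zt)).prodMk
      ((((measurable_pi_apply i).comp M.meas_Sh)).prodMk
        ((measurable_pi_apply i).comp M.meas_S))
  exact h.comp hc

lemma meas_select' (i : Fin nt) (k : Fin 2) (j : Fin n) :
    Measurable fun ω => M.Zt ω i k j (M.S ω i k j) := by
  have h : Measurable fun q : (Fin 2 → 𝒵) × Fin 2 => q.1 q.2 := by
    apply measurable_from_prod_countable_left (β := Fin 2)
    intro l
    exact measurable_pi_apply _
  have hc : Measurable fun ω => (M.Zt ω i k j, M.S ω i k j) := by
    refine Measurable.prodMk ?_ ?_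
    · have h1 : Measurable fun z : Fin nt → Fin 2 → Fin n → Fin 2 → 𝒵 => z i k j :=
        (measurable_pi_apply _).comp ((measurable_pi_apply _).comp (measurable_pi_apply _))
      exact h1.comp M.meas_Zt
    · have h1 : Measurable fun s : Fin nt → Fin 2 → Fin n → Fin 2 => s i k j :=
        (measurable_pi_apply _).comp ((measurable_pi_apply _).comp (measurable_pi_apply _))
      exact h1.comp M.meas_S
  exact h.comp hc

lemma meas_U : Measurable M.U := by
  have htd : Measurable fun ω => fun i j => M.Zt ω i (M.Sh ω i) j (M.S ω i (M.Sh ω i) j) :=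
    measurable_pi_lambda _ fun i => measurable_pi_lambda _ fun j => M.meas_select i j
  exact M.meas_A.comp (htd.prodMk M.meas_Rhat)

lemma meas_W (i : Fin nt) (k : Fin 2) : Measurable (M.W i k) := by
  have htd : Measurable fun ω => fun j => M.Zt ω i k j (M.S ω i k j) :=
    measurable_pi_lambda _ fun j => M.meas_select' i k j
  exact M.meas_B.comp (htd.prodMk (Measurable.prodMk
    ((measurable_pi_apply i).comp M.meas_R) M.meas_U))

lemma meas_lam (i : Fin nt) (k : Fin 2) (j : Fin n) (l : Fin 2) :
    Measurable fun ω => M.lam i k j l ω := by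
  have h1 : Measurable fun z : Fin nt → Fin 2 → Fin n → Fin 2 → 𝒵 => z i k j l :=
    (measurable_pi_apply _).comp ((measurable_pi_apply _).comp
      ((measurable_pi_apply _).comp (measurable_pi_apply _)))
  exact M.meas_loss.comp ((M.meas_W i k).prodMk (h1.comp M.meas_Zt))

lemma lam_nonneg (i : Fin nt) (k : Fin 2) (j : Fin n) (l : Fin 2) (ω : Ω) :
    0 ≤ M.lam i k j l ω := (M.loss_mem _ _).1

lemma lam_le_one (i : Fin nt) (k : Fin 2) (j : Fin n) (l : Fin 2) (ω : Ω) :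
    M.lam i k j l ω ≤ 1 := (M.loss_mem _ _).2

lemma meas_pop (i : Fin nt) (j : Fin n) :
    Measurable fun ω => M.lam i (1 - M.Sh ω i) j (1 - M.S ω i (1 - M.Sh ω i) j) ω := by
  have hX : Measurable fun ω => fun k l : Fin 2 => M.lam i k j l ω :=
    measurable_pi_lambda _ fun k => measurable_pi_lambda _ fun l => M.meas_lam i k j l
  have hY : Measurable fun ω => (M.Sh ω i, fun k : Fin 2 => M.S ω i k j) :=
    (((measurable_pi_apply i).comp M.meas_Sh)).prodMk
      (measurable_pi_lambda _ fun k => (measurable_pi_apply j).comp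
        ((measurable_pi_apply k).comp ((measurable_pi_apply i).comp M.meas_S)))
  have hout : Measurable fun q : (Fin 2 → Fin 2 → ℝ) × (Fin 2 × (Fin 2 → Fin 2)) =>
      q.1 (1 - q.2.1) (1 - q.2.2 (1 - q.2.1)) := by
    apply measurable_from_prod_countable_left
    intro y
    have hh : Measurable fun x : Fin 2 → Fin 2 → ℝ => x (1 - y.1) (1 - y.2 (1 - y.1)) :=
      (measurable_pi_apply (1 - y.2 (1 - y.1))).comp (measurable_pi_apply (1 - y.1))
    exact hh
  exact hout.comp (hX.prodMk hY)

lemma meas_train (i : Fin nt) (j : Fin n) :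
    Measurable fun ω => M.lam i (M.Sh ω i) j (M.S ω i (M.Sh ω i) j) ω := by
  have hX : Measurable fun ω => fun k l : Fin 2 => M.lam i k j l ω :=
    measurable_pi_lambda _ fun k => measurable_pi_lambda _ fun l => M.meas_lam i k j l
  have hY : Measurable fun ω => (M.Sh ω i, fun k : Fin 2 => M.S ω i k j) :=
    (((measurable_pi_apply i).comp M.meas_Sh)).prodMk
      (measurable_pi_lambda _ fun k => (measurable_pi_apply j).comp
        ((measurable_pi_apply k).comp ((measurable_pi_apply i).comp M.meas_S)))
  have hout : Measurable fun q : (Fin 2 → Fin 2 → ℝ) × (Fin 2 × (Fin 2 → Fin 2)) =>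
      q.1 q.2.1 (q.2.2 q.2.1) := by
    apply measurable_from_prod_countable_left
    intro y
    have hh : Measurable fun x : Fin 2 → Fin 2 → ℝ => x y.1 (y.2 y.1) :=
      (measurable_pi_apply (y.2 y.1)).comp (measurable_pi_apply y.1)
    exact hh
  exact hout.comp (hX.prodMk hY)

end MetaSetup
lemma integrable_of_bounds {α : Type*} [MeasurableSpace α] {μ : Measure α} [IsFiniteMeasure μ]
    {f : α → ℝ} (hf : AEStronglyMeasurable f μ) (h0 : ∀ x, 0 ≤ f x) (h1 : ∀ x, f x ≤ 1) :
    Integrable f μ := by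
  refine ⟨hf, ?_⟩
  apply HasFiniteIntegral.of_bounded (C := 1)
  filter_upwards with x
  rw [Real.norm_of_nonneg (h0 x)]; exact h1 x

lemma sum_eval_fun (k : Fin 2) (v : Fin 2 → ℝ) :
    ∑ s : Fin 2 → Fin 2, v (s k) = 2 * ∑ l : Fin 2, v l := by
  rw [← Equiv.sum_comp (piFinTwoEquiv (fun _ => Fin 2)).symm (fun s => v (s k))]
  fin_cases k <;>
    simp [piFinTwoEquiv, Fintype.sum_prod_type, Fin.sum_univ_two] <;> ring

lemma sum_pair_select (u : Fin 2 → Fin 2 → ℝ) :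
    ∑ y : Fin 2 × (Fin 2 → Fin 2), u y.1 (y.2 y.1) = 2 * ∑ k : Fin 2, ∑ l : Fin 2, u k l := by
  rw [Fintype.sum_prod_type, Finset.mul_sum]
  exact Finset.sum_congr rfl fun k _ => sum_eval_fun k (u k)
namespace MetaSetup

variable {Ω 𝒯 𝒵 𝒰 𝒲 Rh Rb : Type*}
    [MeasurableSpace Ω] [MeasurableSpace 𝒯] [MeasurableSpace 𝒵] [MeasurableSpace 𝒰]
    [MeasurableSpace 𝒲] [MeasurableSpace Rh] [MeasurableSpace Rb]
    {nt n : ℕ} (M : MetaSetup Ω 𝒯 𝒵 𝒰 𝒲 Rh Rb nt n)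

lemma key_bound (i : Fin nt) (j : Fin n)
    (htrain : ∫ ω, M.lam i (M.Sh ω i) j (M.S ω i (M.Sh ω i) j) ω ∂M.μ = 0) :
    ∫ ω, M.lam i (1 - M.Sh ω i) j (1 - M.S ω i (1 - M.Sh ω i) j) ω ∂M.μ
      ≤ 4 - 4 * expNeg (condMutualInfo M.μ
          (fun ω => fun k l : Fin 2 => M.lam i k j l ω)
          (fun ω => (M.Sh ω i, fun k : Fin 2 => M.S ω i k j))
          (fun ω => M.Zt ω)) := by
  classical
  set X : Ω → (Fin 2 → Fin 2 → ℝ) := fun ω => fun k l : Fin 2 => M.lam i k j l ω with hXdef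
  set Y : Ω → Fin 2 × (Fin 2 → Fin 2) :=
    fun ω => (M.Sh ω i, fun k : Fin 2 => M.S ω i k j) with hYdef
  set V : Ω → (Fin nt → Fin 2 → Fin n → Fin 2 → 𝒵) := fun ω => M.Zt ω with hVdef
  have hX : Measurable X :=
    measurable_pi_lambda _ fun k => measurable_pi_lambda _ fun l => M.meas_lam i k j l
  have hY : Measurable Y :=
    (((measurable_pi_apply i).comp M.meas_Sh)).prodMk
      (measurable_pi_lambda _ fun k => (measurable_pi_apply j).comp
        ((measurable_pi_apply k).comp ((measurable_pi_apply i).comp M.meas_S)))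
  have hV : Measurable V := M.meas_Zt
  set κX := condDistrib X V M.μ with hκXdef
  set κY := condDistrib Y V M.μ with hκYdef
  set P := M.μ.map (fun ω => (V ω, (X ω, Y ω))) with hPdef
  set Q := (M.μ.map V) ⊗ₘ (κX.prod κY) with hQdef
  have hCMI : condMutualInfo M.μ X Y V = klDiv P Q := rfl
  have hmap : Measurable fun ω => (V ω, (X ω, Y ω)) := hV.prodMk (hX.prodMk hY)
  haveI : IsProbabilityMeasure P := Measure.isProbabilityMeasure_map hmap.aemeasurable
  haveI : IsProbabilityMeasure (M.μ.map V) := Measure.isProbabilityMeasure_map hV.aemeasurable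
  haveI : IsProbabilityMeasure Q := by rw [hQdef]; infer_instance
  -- the clamp function
  set c : ℝ → ℝ := fun t => max 0 (min t 1) with hcdef
  have hcmeas : Measurable c := measurable_const.max (measurable_id.min measurable_const)
  have hc0 : ∀ t, 0 ≤ c t := fun t => le_max_left _ _
  have hc1 : ∀ t, c t ≤ 1 := fun t => max_le (by norm_num) (min_le_right _ _)
  have hcid : ∀ t, 0 ≤ t → t ≤ 1 → c t = t := fun t ht0 ht1 => by
    simp only [hcdef]; rw [min_eq_left ht1, max_eq_right ht0]
  set f₀ : (Fin nt → Fin 2 → Fin n → Fin 2 → 𝒵) ×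
      ((Fin 2 → Fin 2 → ℝ) × (Fin 2 × (Fin 2 → Fin 2))) → ℝ :=
    fun p => c (p.2.1 p.2.2.1 (p.2.2.2 p.2.2.1)) with hf₀def
  have hf₀meas : Measurable f₀ := by
    have h : Measurable fun q : (Fin 2 → Fin 2 → ℝ) × (Fin 2 × (Fin 2 → Fin 2)) =>
        c (q.1 q.2.1 (q.2.2 q.2.1)) := by
      apply measurable_from_prod_countable_left
      intro y
      have hh : Measurable fun x : Fin 2 → Fin 2 → ℝ => c (x y.1 (y.2 y.1)) :=
        hcmeas.comp ((measurable_pi_apply (y.2 y.1)).comp (measurable_pi_apply y.1))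
      exact hh
    exact h.comp measurable_snd
  have hf₀0 : ∀ p, 0 ≤ f₀ p := fun p => hc0 _
  have hf₀1 : ∀ p, f₀ p ≤ 1 := fun p => hc1 _
  -- expected value of f₀ under P is zero
  have hEP : ∫ p, f₀ p ∂P = 0 := by
    rw [hPdef, integral_map hmap.aemeasurable hf₀meas.aestronglyMeasurable]
    have hptw : ∀ ω, f₀ (V ω, (X ω, Y ω)) = M.lam i (M.Sh ω i) j (M.S ω i (M.Sh ω i) j) ω :=
      fun ω => hcid _ (M.lam_nonneg _ _ _ _ _) (M.lam_le_one _ _ _ _ _)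
    rw [integral_congr_ae (Filter.Eventually.of_forall hptw)]
    exact htrain
  have hEQle : ∫ p, f₀ p ∂Q ≤ 1 - expNeg (klDiv P Q) :=
    integral_le_one_sub_expNeg_klDiv P Q hf₀meas hf₀0 hf₀1 hEP
  -- the law of Y is uniform and Y is independent of V
  set uF := (PMF.uniformOfFintype (Fin 2 × (Fin 2 → Fin 2))).toMeasure with huFdef
  have hYlaw : M.μ.map Y = uF := by
    have hcomp : Y = (fun p : (Fin nt → Fin 2) × (Fin nt → Fin 2 → Fin n → Fin 2) =>
        (p.1 i, fun k : Fin 2 => p.2 i k j)) ∘ (fun ω => (M.Sh ω, M.S ω)) := rfl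
    rw [hcomp, ← Measure.map_map (measurable_of_countable _) (M.meas_Sh.prodMk M.meas_S),
      M.law_S, uniform_prod_uniform, law_Y_aux]
  have hindep : IndepFun V Y M.μ := by
    have h := M.indep₁.comp measurable_id
      ((measurable_of_countable (fun p : (Fin nt → Fin 2) × (Fin nt → Fin 2 → Fin n → Fin 2) =>
        (p.1 i, fun k : Fin 2 => p.2 i k j))).comp measurable_fst)
    exact h
  have hjoint : M.μ.map (fun ω => (V ω, Y ω)) = (M.μ.map V) ⊗ₘ Kernel.const _ uF := by
    rw [Measure.compProd_const, ← hYlaw]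
    exact (indepFun_iff_map_prod_eq_prod_map_map hV.aemeasurable hY.aemeasurable).1 hindep
  have haeY : ∀ᵐ v ∂(M.μ.map V), (Kernel.const _ uF) v = κY v :=
    (condDistrib_ae_eq_of_measure_eq_compProd V hY.aemeasurable hjoint).mono fun v h => h.symm
  -- computing the expected value of f₀ under Q
  set G : (Fin 2 → Fin 2 → ℝ) → ℝ :=
    fun x => ∑ y : Fin 2 × (Fin 2 → Fin 2), (8:ℝ)⁻¹ * c (x y.1 (y.2 y.1)) with hGdef
  have hGmeas : Measurable G := Finset.measurable_sum _ fun y _ =>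
    measurable_const.mul (hcmeas.comp ((measurable_pi_apply _).comp (measurable_pi_apply _)))
  have hG0 : ∀ x, 0 ≤ G x := fun x => Finset.sum_nonneg fun y _ =>
    mul_nonneg (by norm_num) (hc0 _)
  have hG1 : ∀ x, G x ≤ 1 := by
    intro x
    calc (∑ y : Fin 2 × (Fin 2 → Fin 2), (8:ℝ)⁻¹ * c (x y.1 (y.2 y.1)))
        ≤ ∑ _y : Fin 2 × (Fin 2 → Fin 2), (8:ℝ)⁻¹ * 1 :=
          Finset.sum_le_sum fun y _ => by
            have := hc1 (x y.1 (y.2 y.1)); nlinarith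
      _ = 1 := by simp
  have hQint : Integrable f₀ Q := integrable_of_bounds hf₀meas.aestronglyMeasurable hf₀0 hf₀1
  have step1 : ∫ p, f₀ p ∂Q = ∫ v, ∫ q, f₀ (v, q) ∂((κX.prod κY) v) ∂(M.μ.map V) := by
    rw [hQdef] at hQint ⊢
    exact Measure.integral_compProd hQint
  have huFsingle : ∀ y : Fin 2 × (Fin 2 → Fin 2), (uF {y}).toReal = (8:ℝ)⁻¹ := by
    intro y
    rw [huFdef, PMF.toMeasure_apply_singleton _ _ (measurableSet_singleton _),
      PMF.uniformOfFintype_apply]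
    simp
  have step2 : ∀ᵐ v ∂(M.μ.map V),
      ∫ q, f₀ (v, q) ∂((κX.prod κY) v) = ∫ x, G x ∂(κX v) := by
    filter_upwards [haeY] with v hv
    rw [Kernel.prod_apply]
    haveI : IsProbabilityMeasure (κX v) := IsMarkovKernel.isProbabilityMeasure v
    haveI : IsProbabilityMeasure (κY v) := IsMarkovKernel.isProbabilityMeasure v
    have hint : Integrable (fun q => f₀ (v, q)) ((κX v).prod (κY v)) :=
      integrable_of_bounds (hf₀meas.comp measurable_prodMk_left).aestronglyMeasurable
        (fun q => hf₀0 _) (fun q => hf₀1 _)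
    rw [MeasureTheory.integral_prod _ hint]
    apply integral_congr_ae (Filter.Eventually.of_forall fun x => ?_)
    rw [← hv, Kernel.const_apply]
    haveI : IsProbabilityMeasure uF := PMF.toMeasure.isProbabilityMeasure _
    rw [integral_fintype (Integrable.of_finite)]
    simp only [hGdef, smul_eq_mul]
    exact Finset.sum_congr rfl fun y _ => by rw [measureReal_def, huFsingle y]
  have hdis : (M.μ.map V) ⊗ₘ κX = M.μ.map (fun ω => (V ω, X ω)) := by
    have h1 : κX = (M.μ.map (fun ω => (V ω, X ω))).condKernel := by
      rw [hκXdef, condDistrib_def]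
    rw [h1, ← Measure.fst_map_prodMk (X := V) hX, Measure.disintegrate]
  have step3 : ∫ v, ∫ x, G x ∂(κX v) ∂(M.μ.map V) = ∫ ω, G (X ω) ∂M.μ := by
    have hGm2 : Measurable
        fun p : (Fin nt → Fin 2 → Fin n → Fin 2 → 𝒵) × (Fin 2 → Fin 2 → ℝ) => G p.2 :=
      hGmeas.comp measurable_snd
    have hGsnd : Integrable
        (fun p : (Fin nt → Fin 2 → Fin n → Fin 2 → 𝒵) × (Fin 2 → Fin 2 → ℝ) => G p.2)
        ((M.μ.map V) ⊗ₘ κX) :=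
      integrable_of_bounds hGm2.aestronglyMeasurable (fun p => hG0 _) (fun p => hG1 _)
    rw [← Measure.integral_compProd hGsnd, hdis,
      integral_map (hV.prodMk hX).aemeasurable hGm2.aestronglyMeasurable]
  set I : Fin 2 × (Fin 2 → Fin 2) → ℝ := fun y => ∫ ω, M.lam i y.1 j (y.2 y.1) ω ∂M.μ with hIdef
  have hlamint : ∀ (k l : Fin 2), Integrable (fun ω => M.lam i k j l ω) M.μ := fun k l =>
    integrable_of_bounds (M.meas_lam i k j l).aestronglyMeasurable
      (M.lam_nonneg i k j l) (M.lam_le_one i k j l)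
  have step4 : ∫ ω, G (X ω) ∂M.μ = ∑ y : Fin 2 × (Fin 2 → Fin 2), (8:ℝ)⁻¹ * I y := by
    simp only [hGdef]
    rw [integral_finset_sum _ (fun y _ => ((hlamint y.1 (y.2 y.1)).congr
      (Filter.Eventually.of_forall fun ω =>
        (hcid _ (M.lam_nonneg _ _ _ _ _) (M.lam_le_one _ _ _ _ _)).symm)).const_mul _)]
    refine Finset.sum_congr rfl fun y _ => ?_
    rw [integral_const_mul]
    congr 1
    apply integral_congr_ae (Filter.Eventually.of_forall fun ω => ?_)
    exact hcid _ (M.lam_nonneg _ _ _ _ _) (M.lam_le_one _ _ _ _ _)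
  have hEQ : ∫ p, f₀ p ∂Q = ∑ y : Fin 2 × (Fin 2 → Fin 2), (8:ℝ)⁻¹ * I y := by
    rw [step1, integral_congr_ae step2, step3, step4]
  -- bounding the population loss
  have hpop_ptw : ∀ ω, M.lam i (1 - M.Sh ω i) j (1 - M.S ω i (1 - M.Sh ω i) j) ω
      ≤ ∑ k : Fin 2, ∑ l : Fin 2, M.lam i k j l ω := by
    intro ω
    have h1 : M.lam i (1 - M.Sh ω i) j (1 - M.S ω i (1 - M.Sh ω i) j) ω
        ≤ ∑ l : Fin 2, M.lam i (1 - M.Sh ω i) j l ω :=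
      Finset.single_le_sum (f := fun l : Fin 2 => M.lam i (1 - M.Sh ω i) j l ω)
        (fun l _ => M.lam_nonneg _ _ _ _ _) (Finset.mem_univ _)
    exact h1.trans (Finset.single_le_sum (f := fun k => ∑ l : Fin 2, M.lam i k j l ω)
      (fun k _ => Finset.sum_nonneg fun l _ => M.lam_nonneg _ _ _ _ _) (Finset.mem_univ _))
  have hpopint : Integrable (fun ω => M.lam i (1 - M.Sh ω i) j (1 - M.S ω i (1 - M.Sh ω i) j) ω) M.μ := by
    have hmeas : Measurable fun ω => M.lam i (1 - M.Sh ω i) j (1 - M.S ω i (1 - M.Sh ω i) j) ω := by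
      have hout : Measurable fun q : (Fin 2 → Fin 2 → ℝ) × (Fin 2 × (Fin 2 → Fin 2)) =>
          q.1 (1 - q.2.1) (1 - q.2.2 (1 - q.2.1)) := by
        apply measurable_from_prod_countable_left
        intro y
        have hh : Measurable fun x : Fin 2 → Fin 2 → ℝ => x (1 - y.1) (1 - y.2 (1 - y.1)) :=
          (measurable_pi_apply (1 - y.2 (1 - y.1))).comp (measurable_pi_apply (1 - y.1))
        exact hh
      exact hout.comp (hX.prodMk hY)
    exact integrable_of_bounds hmeas.aestronglyMeasurable
      (fun ω => M.lam_nonneg _ _ _ _ _) (fun ω => M.lam_le_one _ _ _ _ _)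
  have hpople : ∫ ω, M.lam i (1 - M.Sh ω i) j (1 - M.S ω i (1 - M.Sh ω i) j) ω ∂M.μ
      ≤ ∑ k : Fin 2, ∑ l : Fin 2, ∫ ω, M.lam i k j l ω ∂M.μ := by
    calc ∫ ω, M.lam i (1 - M.Sh ω i) j (1 - M.S ω i (1 - M.Sh ω i) j) ω ∂M.μ
        ≤ ∫ ω, ∑ k : Fin 2, ∑ l : Fin 2, M.lam i k j l ω ∂M.μ := by
          apply integral_mono hpopint _ hpop_ptw
          exact integrable_finset_sum _ fun k _ => integrable_finset_sum _ fun l _ => hlamint k l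
      _ = ∑ k : Fin 2, ∑ l : Fin 2, ∫ ω, M.lam i k j l ω ∂M.μ := by
          rw [integral_finset_sum _ fun k _ => integrable_finset_sum _ fun l _ => hlamint k l]
          exact Finset.sum_congr rfl fun k _ => integral_finset_sum _ fun l _ => hlamint k l
  -- arithmetic
  have hsum8 : ∑ y : Fin 2 × (Fin 2 → Fin 2), I y
      = 2 * ∑ k : Fin 2, ∑ l : Fin 2, ∫ ω, M.lam i k j l ω ∂M.μ :=
    sum_pair_select (fun k l => ∫ ω, M.lam i k j l ω ∂M.μ)
  have hEQ' : ∑ k : Fin 2, ∑ l : Fin 2, ∫ ω, M.lam i k j l ω ∂M.μ = 4 * ∫ p, f₀ p ∂Q := by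
    rw [hEQ, ← Finset.mul_sum]
    rw [show (∑ y : Fin 2 × (Fin 2 → Fin 2), I y)
        = 2 * ∑ k : Fin 2, ∑ l : Fin 2, ∫ ω, M.lam i k j l ω ∂M.μ from hsum8]
    ring
  rw [hCMI]
  linarith [hEQle, hpople, hEQ']

end MetaSetup
lemma ofReal_four_sub_le (T : ℝ≥0∞) :
    ENNReal.ofReal (4 - 4 * expNeg T) ≤ 4 * T := by
  rcases eq_or_ne T ⊤ with h | h
  · rw [h, ENNReal.mul_top (by norm_num)]
    exact le_top
  · rw [expNeg, if_neg h]
    have ht : 0 ≤ T.toReal := ENNReal.toReal_nonneg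
    have hexp : 1 - T.toReal ≤ Real.exp (-T.toReal) := by
      have := Real.add_one_le_exp (-T.toReal); linarith
    have hle : 4 - 4 * Real.exp (-T.toReal) ≤ 4 * T.toReal := by nlinarith
    calc ENNReal.ofReal (4 - 4 * Real.exp (-T.toReal))
        ≤ ENNReal.ofReal (4 * T.toReal) := ENNReal.ofReal_le_ofReal hle
      _ = ENNReal.ofReal 4 * ENNReal.ofReal T.toReal := ENNReal.ofReal_mul (by norm_num)
      _ = 4 * T := by
          rw [ENNReal.ofReal_toReal h]
          norm_num

open MetaSetup in
/-- **Corollary 3 (interpolating one-step binary KL bound).**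
If `L̂_train = 0`, then
`L̄_pop ≤ 4 − 4 exp(−avg I(λ^{(i)}_j; Ŝ_i, S^{(i)}_j | Z̃)) ≤ 4 avg I(λ^{(i)}_j; Ŝ_i, S^{(i)}_j | Z̃)`. -/
theorem interpolating_one_step_binary_kl_bound
    {Ω 𝒯 𝒵 𝒰 𝒲 Rh Rb : Type*}
    [MeasurableSpace Ω] [MeasurableSpace 𝒯] [MeasurableSpace 𝒵] [MeasurableSpace 𝒰]
    [MeasurableSpace 𝒲] [MeasurableSpace Rh] [MeasurableSpace Rb]
    {nt n : ℕ} (M : MetaSetup Ω 𝒯 𝒵 𝒰 𝒲 Rh Rb nt n)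
    (hinterp : M.Ltrain = 0) :
    M.Lpop
      ≤ 4 - 4 * expNeg (((n * nt : ℕ) : ℝ≥0∞)⁻¹ * ∑ i : Fin nt, ∑ j : Fin n,
          condMutualInfo M.μ
            (fun ω => fun k l : Fin 2 => M.lam i k j l ω)
            (fun ω => (M.Sh ω i, fun k : Fin 2 => M.S ω i k j))
            (fun ω => M.Zt ω))
    ∧ ENNReal.ofReal
        (4 - 4 * expNeg (((n * nt : ℕ) : ℝ≥0∞)⁻¹ * ∑ i : Fin nt, ∑ j : Fin n,
          condMutualInfo M.μ
            (fun ω => fun k l : Fin 2 => M.lam i k j l ω)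
            (fun ω => (M.Sh ω i, fun k : Fin 2 => M.S ω i k j))
            (fun ω => M.Zt ω)))
      ≤ 4 * (((n * nt : ℕ) : ℝ≥0∞)⁻¹ * ∑ i : Fin nt, ∑ j : Fin n,
          condMutualInfo M.μ
            (fun ω => fun k l : Fin 2 => M.lam i k j l ω)
            (fun ω => (M.Sh ω i, fun k : Fin 2 => M.S ω i k j))
            (fun ω => M.Zt ω)) := by
  classical
  refine ⟨?_, ofReal_four_sub_le _⟩
  set cmi : Fin nt → Fin n → ℝ≥0∞ := fun i j =>
    condMutualInfo M.μ
      (fun ω => fun k l : Fin 2 => M.lam i k j l ω)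
      (fun ω => (M.Sh ω i, fun k : Fin 2 => M.S ω i k j))
      (fun ω => M.Zt ω) with hcmidef
  set pop : Fin nt → Fin n → ℝ := fun i j =>
    ∫ ω, M.lam i (1 - M.Sh ω i) j (1 - M.S ω i (1 - M.Sh ω i) j) ω ∂M.μ with hpopdef
  have hLpop : M.Lpop = ((n : ℝ) * nt)⁻¹ * ∑ i : Fin nt, ∑ j : Fin n, pop i j := rfl
  -- degenerate case
  rcases eq_or_ne (n * nt) 0 with hN | hN
  · have h0 : (∑ i : Fin nt, ∑ j : Fin n, pop i j) = 0 ∧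
        (∑ i : Fin nt, ∑ j : Fin n, cmi i j) = 0 := by
      rcases Nat.mul_eq_zero.1 hN with h | h
      · subst h; simp
      · subst h; simp
    rw [hLpop, h0.1, mul_zero, h0.2, mul_zero]
    simp [expNeg]
  -- main case
  have hn : n ≠ 0 := fun h => hN (by simp [h])
  have hnt : nt ≠ 0 := fun h => hN (by simp [h])
  have hNR : (0:ℝ) < (n : ℝ) * nt := by
    have h1 := Nat.pos_of_ne_zero hn
    have h2 := Nat.pos_of_ne_zero hnt
    positivity
  -- per-term interpolation
  have htr : ∀ i : Fin nt, ∀ j : Fin n,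
      ∫ ω, M.lam i (M.Sh ω i) j (M.S ω i (M.Sh ω i) j) ω ∂M.μ = 0 := by
    have hnn : ∀ i : Fin nt, ∀ j : Fin n,
        0 ≤ ∫ ω, M.lam i (M.Sh ω i) j (M.S ω i (M.Sh ω i) j) ω ∂M.μ := fun i j =>
      integral_nonneg fun ω => M.lam_nonneg _ _ _ _ _
    have hsum : (∑ i : Fin nt, ∑ j : Fin n,
        ∫ ω, M.lam i (M.Sh ω i) j (M.S ω i (M.Sh ω i) j) ω ∂M.μ) = 0 := by
      have heq : M.Ltrain = ((n : ℝ) * nt)⁻¹ * ∑ i : Fin nt, ∑ j : Fin n,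
          ∫ ω, M.lam i (M.Sh ω i) j (M.S ω i (M.Sh ω i) j) ω ∂M.μ := rfl
      rw [heq] at hinterp
      rcases mul_eq_zero.1 hinterp with h | h
      · exact absurd h (by positivity)
      · exact h
    have h1 := (Finset.sum_eq_zero_iff_of_nonneg
      (fun i _ => Finset.sum_nonneg fun j _ => hnn i j)).1 hsum
    intro i j
    exact (Finset.sum_eq_zero_iff_of_nonneg (fun j _ => hnn i j)).1
      (h1 i (Finset.mem_univ i)) j (Finset.mem_univ j)
  have hkey : ∀ i j, pop i j ≤ 4 - 4 * expNeg (cmi i j) := fun i j =>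
    M.key_bound i j (htr i j)
  have hpop_le_one : ∀ i j, pop i j ≤ 1 := by
    intro i j
    have hint : Integrable
        (fun ω => M.lam i (1 - M.Sh ω i) j (1 - M.S ω i (1 - M.Sh ω i) j) ω) M.μ :=
      integrable_of_bounds (M.meas_pop i j).aestronglyMeasurable
        (fun ω => M.lam_nonneg _ _ _ _ _) (fun ω => M.lam_le_one _ _ _ _ _)
    calc pop i j ≤ ∫ _ω, (1:ℝ) ∂M.μ :=
          integral_mono hint (integrable_const 1) (fun ω => M.lam_le_one _ _ _ _ _)
      _ = 1 := by simp
  by_cases htop : (∑ i : Fin nt, ∑ j : Fin n, cmi i j) = ⊤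
  · rw [htop, ENNReal.mul_top (by
      simp only [ne_eq, ENNReal.inv_eq_zero]
      exact ENNReal.natCast_ne_top _)]
    rw [expNeg, if_pos rfl, mul_zero, sub_zero, hLpop]
    calc ((n : ℝ) * nt)⁻¹ * ∑ i : Fin nt, ∑ j : Fin n, pop i j
        ≤ ((n : ℝ) * nt)⁻¹ * ∑ _i : Fin nt, ∑ _j : Fin n, (1:ℝ) := by
          apply mul_le_mul_of_nonneg_left _ (by positivity)
          exact Finset.sum_le_sum fun i _ => Finset.sum_le_sum fun j _ => hpop_le_one i j
      _ = 1 := by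
          simp only [Finset.sum_const, Finset.card_univ, Fintype.card_fin, smul_eq_mul, mul_one]
          field_simp
          ring
      _ ≤ 4 := by norm_num
  -- all CMIs finite
  have hfin : ∀ i : Fin nt, ∀ j : Fin n, cmi i j ≠ ⊤ := by
    intro i j
    have h1 := ENNReal.sum_lt_top.1 (lt_top_iff_ne_top.2 htop) i (Finset.mem_univ i)
    exact (ENNReal.sum_lt_top.1 h1 j (Finset.mem_univ j)).ne
  set t : Fin nt → Fin n → ℝ := fun i j => (cmi i j).toReal with htdef
  have ht0 : ∀ i j, 0 ≤ t i j := fun i j => ENNReal.toReal_nonneg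
  have hT : (((n * nt : ℕ) : ℝ≥0∞)⁻¹ * ∑ i : Fin nt, ∑ j : Fin n, cmi i j) ≠ ⊤ := by
    apply ENNReal.mul_ne_top _ htop
    simp only [ne_eq, ENNReal.inv_eq_top]
    exact_mod_cast hN
  have hTtoReal : (((n * nt : ℕ) : ℝ≥0∞)⁻¹ * ∑ i : Fin nt, ∑ j : Fin n, cmi i j).toReal
      = ((n : ℝ) * nt)⁻¹ * ∑ i : Fin nt, ∑ j : Fin n, t i j := by
    rw [ENNReal.toReal_mul, ENNReal.toReal_inv,
      ENNReal.toReal_sum (fun i _ => by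
        exact (ENNReal.sum_lt_top.2 fun j _ => lt_top_iff_ne_top.2 (hfin i j)).ne)]
    congr 1
    · simp
    · exact Finset.sum_congr rfl fun i _ => ENNReal.toReal_sum fun j _ => hfin i j
  rw [expNeg, if_neg hT, hTtoReal, hLpop]
  -- per-term bound in real form
  have hkey' : ∀ i j, pop i j ≤ 4 - 4 * Real.exp (-(t i j)) := by
    intro i j
    have h := hkey i j
    rwa [expNeg, if_neg (hfin i j)] at h
  -- Jensen via weighted AM-GM
  have hw : ∑ _p : Fin nt × Fin n, ((n : ℝ) * nt)⁻¹ = 1 := by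
    simp only [Finset.sum_const, Finset.card_univ, Fintype.card_prod, Fintype.card_fin,
      smul_eq_mul]
    have hnR : (n : ℝ) ≠ 0 := by exact_mod_cast hn
    have hntR : (nt : ℝ) ≠ 0 := by exact_mod_cast hnt
    field_simp
    rw [nsmul_eq_mul, Nat.cast_mul, one_div, mul_comm (nt : ℝ), mul_inv_cancel₀ (mul_ne_zero hnR hntR)]
  have hprod : (∏ p : Fin nt × Fin n, Real.exp (-(t p.1 p.2)) ^ (((n : ℝ) * nt)⁻¹))
      = Real.exp (-(((n : ℝ) * nt)⁻¹ * ∑ i : Fin nt, ∑ j : Fin n, t i j)) := by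
    have h1 : ∀ p : Fin nt × Fin n, Real.exp (-(t p.1 p.2)) ^ (((n : ℝ) * nt)⁻¹)
        = Real.exp (-(t p.1 p.2) * ((n : ℝ) * nt)⁻¹) := fun p => (Real.exp_mul _ _).symm
    rw [Finset.prod_congr rfl (fun p _ => h1 p), ← Real.exp_sum]
    congr 1
    rw [← Finset.sum_mul, Fintype.sum_prod_type (f := fun p : Fin nt × Fin n => -(t p.1 p.2))]
    have h2 : ∀ i : Fin nt, (∑ j : Fin n, -(t i j)) = -(∑ j : Fin n, t i j) := fun i => by
      rw [Finset.sum_neg_distrib]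
    rw [Finset.sum_congr rfl (fun i _ => h2 i), Finset.sum_neg_distrib]
    ring
  have hjensen : Real.exp (-(((n : ℝ) * nt)⁻¹ * ∑ i : Fin nt, ∑ j : Fin n, t i j))
      ≤ ((n : ℝ) * nt)⁻¹ * ∑ i : Fin nt, ∑ j : Fin n, Real.exp (-(t i j)) := by
    have hgm := Real.geom_mean_le_arith_mean_weighted Finset.univ
      (fun _p : Fin nt × Fin n => ((n : ℝ) * nt)⁻¹)
      (fun p => Real.exp (-(t p.1 p.2)))
      (fun p _ => by positivity) hw (fun p _ => (Real.exp_pos _).le)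
    calc Real.exp (-(((n : ℝ) * nt)⁻¹ * ∑ i : Fin nt, ∑ j : Fin n, t i j))
        = ∏ p : Fin nt × Fin n, Real.exp (-(t p.1 p.2)) ^ (((n : ℝ) * nt)⁻¹) := hprod.symm
      _ ≤ ∑ p : Fin nt × Fin n, ((n : ℝ) * nt)⁻¹ * Real.exp (-(t p.1 p.2)) := hgm
      _ = ((n : ℝ) * nt)⁻¹ * ∑ i : Fin nt, ∑ j : Fin n, Real.exp (-(t i j)) := by
          rw [← Finset.mul_sum, Fintype.sum_prod_type]
  calc ((n : ℝ) * nt)⁻¹ * ∑ i : Fin nt, ∑ j : Fin n, pop i j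
      ≤ ((n : ℝ) * nt)⁻¹ * ∑ i : Fin nt, ∑ j : Fin n, (4 - 4 * Real.exp (-(t i j))) := by
        apply mul_le_mul_of_nonneg_left _ (by positivity)
        exact Finset.sum_le_sum fun i _ => Finset.sum_le_sum fun j _ => hkey' i j
    _ = 4 - 4 * (((n : ℝ) * nt)⁻¹ * ∑ i : Fin nt, ∑ j : Fin n, Real.exp (-(t i j))) := by
        simp only [Finset.sum_sub_distrib, Finset.sum_const, Finset.card_univ, Fintype.card_fin,
          smul_eq_mul, ← Finset.mul_sum]
        have hNR' : ((n : ℝ) * nt) ≠ 0 := ne_of_gt hNR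
        field_simp
        ring
    _ ≤ 4 - 4 * Real.exp (-(((n : ℝ) * nt)⁻¹ * ∑ i : Fin nt, ∑ j : Fin n, t i j)) := by
        nlinarith [hjensen]
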